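/- Let C be a d-circuit. For every tuple-weighting ω : R(C) → ℝ₊, the edge-weighting W induced by ω (W(e) := Σ_{τ ∈ R(e)} ω(τ)) is sound: for every non-output ∪-gate u, Σ_{i ∈ in(u)} W(i) = Σ_{o ∈ out(u)} W(o); and for every ×-gate u, all ingoing edges get equal weight and, when u is not the output, this common weight equals Σ_{o ∈ out(u)} W(o). -/
import Mathlib


open Finset

/-- Labels of gates in a `{∪,×}`-circuit: inputs `x/d`, union gates, product gates. -/
inductive GLabel (X D : Type) where
  | inp (x : X) (d : D)
  | union
  | prod

/-- Restriction of a (partial) tuple to a set of attributes. -/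
def restrictTup {X D : Type} [DecidableEq X] (τ : X → Option D) (A : Finset X) :
    X → Option D :=
  fun x => if x ∈ A then τ x else none

/-- A `{∪,×}`-circuit on attributes `X` and domain `D`: a finite DAG whose leaves are
labeled by singleton relations `x/d`, internal gates by `∪` or `×` (with the syntactic
restrictions on attribute sets), together with its semantics `rel`. -/
structure Circuit (X D : Type) [Fintype X] [Fintype D] [DecidableEq X] [DecidableEq D] where
  Gate : Type
  fg : Fintype Gate
  dg : DecidableEq Gate
  children : Gate → Finset Gate
  label : Gate → GLabel X D
  output : Gate
  attrs : Gate → Finset X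
  rel : Gate → Finset (X → Option D)
  depth : Gate → ℕ
  depth_lt : ∀ u, ∀ c ∈ children u, depth c < depth u
  inp_no_children : ∀ u x d, label u = .inp x d → children u = ∅
  internal_children_nonempty :
    ∀ u, (label u = .union ∨ label u = .prod) → (children u).Nonempty
  attrs_inp : ∀ u x d, label u = .inp x d → attrs u = {x}
  attrs_internal :
    ∀ u, (label u = .union ∨ label u = .prod) → attrs u = (children u).biUnion attrs
  union_attrs : ∀ u, label u = .union → ∀ c ∈ children u, attrs c = attrs u
  prod_attrs : ∀ u, label u = .prod →
    ∀ c₁ ∈ children u, ∀ c₂ ∈ children u, c₁ ≠ c₂ → Disjoint (attrs c₁) (attrs c₂)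
  rel_support : ∀ u, ∀ τ ∈ rel u, ∀ x, (τ x).isSome ↔ x ∈ attrs u
  rel_inp : ∀ u x d, label u = .inp x d →
    ∀ τ, τ ∈ rel u ↔ τ = (fun y => if y = x then some d else none)
  rel_union : ∀ u, label u = .union → ∀ τ, τ ∈ rel u ↔ ∃ c ∈ children u, τ ∈ rel c
  rel_prod : ∀ u, label u = .prod →
    ∀ τ, τ ∈ rel u ↔ ((∀ x, (τ x).isSome ↔ x ∈ attrs u) ∧
      ∀ c ∈ children u, restrictTup τ (attrs c) ∈ rel c)

attribute [instance] Circuit.fg Circuit.dg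

namespace Circuit

variable {X D : Type} [Fintype X] [Fintype D] [DecidableEq X] [DecidableEq D]

/-- A d-circuit: every `∪`-gate is disjoint (its children define pairwise
disjoint relations). -/
def DisjointUnions (C : Circuit X D) : Prop :=
  ∀ u, C.label u = .union → ∀ c₁ ∈ C.children u, ∀ c₂ ∈ C.children u,
    c₁ ≠ c₂ → Disjoint (C.rel c₁) (C.rel c₂)

/-- The gates of the proof-tree of a tuple `τ`: the output gate is in, and a child `u`
of an included gate `v` is included iff the restriction of `τ` to the attributes of
the subcircuit rooted at `u` belongs to the relation of `u`. -/
inductive InPT (C : Circuit X D) (τ : X → Option D) : C.Gate → Prop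
  | out : InPT C τ C.output
  | step {u v : C.Gate} : InPT C τ v → u ∈ C.children v →
      restrictTup τ (C.attrs u) ∈ C.rel u → InPT C τ u

/-- An edge `e = (u, v)` (from child `u` to parent `v`) belongs to the proof-tree
of `τ`. -/
def EdgeInPT (C : Circuit X D) (τ : X → Option D) (e : C.Gate × C.Gate) : Prop :=
  C.InPT τ e.2 ∧ e.1 ∈ C.children e.2 ∧ restrictTup τ (C.attrs e.1) ∈ C.rel e.1

/-- The edges of the circuit, directed from child to parent. -/
def edges (C : Circuit X D) : Finset (C.Gate × C.Gate) :=
  Finset.univ.filter (fun e => e.1 ∈ C.children e.2)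

/-- Outgoing edges of a gate `u` (towards its parents). -/
def outEdges (C : Circuit X D) (u : C.Gate) : Finset (C.Gate × C.Gate) :=
  C.edges.filter (fun e => e.1 = u)

/-- Ingoing edges of a gate `u` (from its children). -/
def inEdges (C : Circuit X D) (u : C.Gate) : Finset (C.Gate × C.Gate) :=
  C.edges.filter (fun e => e.2 = u)

open Classical in
/-- `R(e)`: the set of tuples of `R(C)` whose proof-tree contains the edge `e`. -/
noncomputable def relEdge (C : Circuit X D) (e : C.Gate × C.Gate) :
    Finset (X → Option D) :=
  (C.rel C.output).filter (fun τ => C.EdgeInPT τ e)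

/-- Soundness of an edge-weighting: flow conservation at non-output `∪`-gates, and at
`×`-gates all ingoing edges carry the same weight, which (for non-output gates)
equals the sum of the outgoing weights. -/
def Sound (C : Circuit X D) (W : C.Gate × C.Gate → ℝ) : Prop :=
  (∀ u, C.label u = .union → u ≠ C.output →
      ∑ i ∈ C.inEdges u, W i = ∑ o ∈ C.outEdges u, W o) ∧
  (∀ u, C.label u = .prod →
      (∀ i ∈ C.inEdges u, ∀ i' ∈ C.inEdges u, W i = W i') ∧
      (u ≠ C.output → ∀ i ∈ C.inEdges u, W i = ∑ o ∈ C.outEdges u, W o))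

end Circuit

namespace Circuit

variable {X D : Type} [Fintype X] [Fintype D] [DecidableEq X] [DecidableEq D]
  {C : Circuit X D}

lemma restrictTup_restrictTup {A B : Finset X} (h : A ⊆ B) (τ : X → Option D) :
    restrictTup (restrictTup τ B) A = restrictTup τ A := by
  funext x
  unfold restrictTup
  by_cases hx : x ∈ A
  · simp [hx, h hx]
  · simp [hx]

lemma restrictTup_eq_self {τ : X → Option D} {A : Finset X}
    (h : ∀ x, (τ x).isSome ↔ x ∈ A) : restrictTup τ A = τ := by
  funext x
  unfold restrictTup
  by_cases hx : x ∈ A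
  · simp [hx]
  · simp only [hx, if_false]
    exact (Option.not_isSome_iff_eq_none.mp (fun hs => hx ((h x).mp hs))).symm

lemma attrs_child_subset {c v : C.Gate} (hc : c ∈ C.children v) :
    C.attrs c ⊆ C.attrs v := by
  cases hl : C.label v with
  | inp x d =>
    rw [C.inp_no_children v x d hl] at hc
    simp at hc
  | union =>
    rw [C.attrs_internal v (Or.inl hl)]
    exact Finset.subset_biUnion_of_mem _ hc
  | prod =>
    rw [C.attrs_internal v (Or.inr hl)]
    exact Finset.subset_biUnion_of_mem _ hc

lemma attrs_nonempty (u : C.Gate) : (C.attrs u).Nonempty := by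
  have H : ∀ n, ∀ u : C.Gate, C.depth u < n → (C.attrs u).Nonempty := by
    intro n
    induction n with
    | zero => intro u h; omega
    | succ n ih =>
      intro u h
      cases hl : C.label u with
      | inp x d => rw [C.attrs_inp u x d hl]; exact ⟨x, by simp⟩
      | union =>
        obtain ⟨c, hc⟩ := C.internal_children_nonempty u (Or.inl hl)
        obtain ⟨x, hx⟩ := ih c (by have := C.depth_lt u c hc; omega)
        rw [C.attrs_internal u (Or.inl hl)]
        exact ⟨x, Finset.mem_biUnion.mpr ⟨c, hc, hx⟩⟩
      | prod =>
        obtain ⟨c, hc⟩ := C.internal_children_nonempty u (Or.inr hl)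
        obtain ⟨x, hx⟩ := ih c (by have := C.depth_lt u c hc; omega)
        rw [C.attrs_internal u (Or.inr hl)]
        exact ⟨x, Finset.mem_biUnion.mpr ⟨c, hc, hx⟩⟩
  exact H (C.depth u + 1) u (by omega)

lemma inPT_mem {τ : X → Option D} (hτ : τ ∈ C.rel C.output) {u : C.Gate}
    (h : C.InPT τ u) : restrictTup τ (C.attrs u) ∈ C.rel u := by
  induction h with
  | out => rw [restrictTup_eq_self (C.rel_support _ τ hτ)]; exact hτ
  | step _ _ hr => exact hr

/-- Downward reachability in the proof-tree of `τ`: `PTD C τ a b` means `a`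
is reachable from `b` going along proof-tree edges. -/
inductive PTD (C : Circuit X D) (τ : X → Option D) : C.Gate → C.Gate → Prop
  | refl (v) : PTD C τ v v
  | step {u w v} : PTD C τ w v → u ∈ C.children w →
      restrictTup τ (C.attrs u) ∈ C.rel u → PTD C τ u v

lemma ptd_depth_le {τ : X → Option D} {a b : C.Gate} (h : PTD C τ a b) :
    C.depth a ≤ C.depth b := by
  induction h with
  | refl => exact le_rfl
  | step _ hc _ ih =>
    exact le_of_lt (lt_of_lt_of_le (C.depth_lt _ _ hc) ih)

lemma inPT_ptd {τ : X → Option D} {v : C.Gate} (h : C.InPT τ v) :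
    PTD C τ v C.output := by
  induction h with
  | out => exact PTD.refl _
  | step _ hc hr ih => exact PTD.step ih hc hr

/-- The key branching lemma: if `v₂` is a proof-tree child of `w` and `v₁` is a
proof-tree descendant of `w`, and both carry the attribute `x`, then either
`v₁ = w` or `v₁` is a proof-tree descendant of `v₂`. -/
lemma ptd_branch (hd : C.DisjointUnions) {τ : X → Option D} {x : X} :
    ∀ {v₁ w : C.Gate}, PTD C τ v₁ w → ∀ {v₂ : C.Gate}, v₂ ∈ C.children w →
      restrictTup τ (C.attrs v₂) ∈ C.rel v₂ → x ∈ C.attrs v₂ →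
      x ∈ C.attrs v₁ → v₁ = w ∨ PTD C τ v₁ v₂ := by
  intro v₁ w h
  induction h with
  | refl => exact fun _ _ _ _ => Or.inl rfl
  | @step u w₁ w' hptd hc hr ih =>
    intro v₂ hv₂ hr₂ hx₂ hxu
    rcases ih hv₂ hr₂ hx₂ (attrs_child_subset hc hxu) with h' | h'
    · subst h'
      by_cases huv : u = v₂
      · subst huv; exact Or.inr (PTD.refl _)
      · exfalso
        cases hlw : C.label w₁ with
        | inp x' d =>
          rw [C.inp_no_children w₁ x' d hlw] at hc
          simp at hc
        | union =>
          have h₁ := C.union_attrs w₁ hlw _ hc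
          have h₂ := C.union_attrs w₁ hlw _ hv₂
          have hdisj := hd w₁ hlw _ hc _ hv₂ huv
          rw [h₁, ← h₂] at hr
          exact Finset.disjoint_left.mp hdisj hr hr₂
        | prod =>
          have hdisj := C.prod_attrs w₁ hlw _ hc _ hv₂ huv
          exact Finset.disjoint_left.mp hdisj hxu hx₂
    · exact Or.inr (PTD.step h' hc hr)

/-- Any two proof-tree gates sharing an attribute are comparable. -/
lemma ptd_comp (hd : C.DisjointUnions) {τ : X → Option D} {x : X} {v₁ v₂ : C.Gate}
    (h₁ : C.InPT τ v₁) (h₂ : C.InPT τ v₂) (hx₁ : x ∈ C.attrs v₁)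
    (hx₂ : x ∈ C.attrs v₂) : PTD C τ v₁ v₂ ∨ PTD C τ v₂ v₁ := by
  revert hx₂
  induction h₂ with
  | out => exact fun _ => Or.inl (inPT_ptd h₁)
  | @step u v h hc hr ih =>
    intro hxu
    rcases ih (attrs_child_subset hc hxu) with h' | h'
    · rcases ptd_branch hd h' hc hr hxu hx₁ with rfl | h''
      · exact Or.inr (PTD.step (PTD.refl _) hc hr)
      · exact Or.inl h''
    · exact Or.inr (PTD.step h' hc hr)

/-- In a d-circuit, a non-output gate has a unique proof-tree parent. -/
lemma parent_unique (hd : C.DisjointUnions) {τ : X → Option D}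
    (hτ : τ ∈ C.rel C.output) {u v₁ v₂ : C.Gate}
    (h₁ : C.InPT τ v₁) (h₂ : C.InPT τ v₂) (hc₁ : u ∈ C.children v₁)
    (hc₂ : u ∈ C.children v₂) (hr : restrictTup τ (C.attrs u) ∈ C.rel u) :
    v₁ = v₂ := by
  obtain ⟨x, hx⟩ := attrs_nonempty u
  have hx₁ := attrs_child_subset hc₁ hx
  have hx₂ := attrs_child_subset hc₂ hx
  rcases ptd_comp hd h₁ h₂ hx₁ hx₂ with h | h
  · rcases ptd_branch hd h hc₂ hr hx hx₁ with h' | h'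
    · exact h'
    · exact absurd (ptd_depth_le h') (not_le.mpr (C.depth_lt _ _ hc₁))
  · rcases ptd_branch hd h hc₁ hr hx hx₂ with h' | h'
    · exact h'.symm
    · exact absurd (ptd_depth_le h') (not_le.mpr (C.depth_lt _ _ hc₂))

/-- In a d-circuit, a union gate whose relation contains the restricted tuple has a
unique child containing it. -/
lemma union_child_unique (hd : C.DisjointUnions) {τ : X → Option D} {u : C.Gate}
    (hl : C.label u = .union) (hr : restrictTup τ (C.attrs u) ∈ C.rel u) :
    ∃! c, c ∈ C.children u ∧ restrictTup τ (C.attrs c) ∈ C.rel c := by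
  obtain ⟨c, hc, hrc⟩ := (C.rel_union u hl _).mp hr
  have hac := C.union_attrs u hl c hc
  refine ⟨c, ⟨hc, by rw [hac]; exact hrc⟩, ?_⟩
  rintro c' ⟨hc', hrc'⟩
  by_contra hne
  have hdisj := hd u hl c' hc' c hc hne
  have hac' := C.union_attrs u hl c' hc'
  rw [hac'] at hrc'
  exact Finset.disjoint_left.mp hdisj hrc' hrc

lemma mem_inEdges {e : C.Gate × C.Gate} {u : C.Gate} :
    e ∈ C.inEdges u ↔ e.1 ∈ C.children u ∧ e.2 = u := by
  simp only [inEdges, edges, Finset.mem_filter, Finset.mem_univ, true_and]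
  constructor
  · rintro ⟨h1, h2⟩; subst h2; exact ⟨h1, rfl⟩
  · rintro ⟨h1, h2⟩; subst h2; exact ⟨h1, rfl⟩

lemma mem_outEdges {e : C.Gate × C.Gate} {u : C.Gate} :
    e ∈ C.outEdges u ↔ e.1 = u ∧ u ∈ C.children e.2 := by
  simp only [outEdges, edges, Finset.mem_filter, Finset.mem_univ, true_and]
  constructor
  · rintro ⟨h1, h2⟩; subst h2; exact ⟨rfl, h1⟩
  · rintro ⟨h1, h2⟩; subst h1; exact ⟨h2, rfl⟩

lemma edgeInPT_prod_iff {τ : X → Option D} {u c : C.Gate}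
    (hτ : τ ∈ C.rel C.output) (hl : C.label u = .prod) (hc : c ∈ C.children u) :
    C.EdgeInPT τ (c, u) ↔ C.InPT τ u := by
  constructor
  · exact fun h => h.1
  · intro h
    have hr := inPT_mem hτ h
    have h2 := ((C.rel_prod u hl _).mp hr).2 c hc
    rw [restrictTup_restrictTup (attrs_child_subset hc)] at h2
    exact ⟨h, hc, h2⟩

open Classical in
lemma filter_in_union (hd : C.DisjointUnions) {τ : X → Option D} {u : C.Gate}
    (hτ : τ ∈ C.rel C.output) (hl : C.label u = .union) :
    ((C.inEdges u).filter (fun e => C.EdgeInPT τ e)).card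
      = if C.InPT τ u then 1 else 0 := by
  by_cases h : C.InPT τ u
  · rw [if_pos h]
    obtain ⟨c₀, ⟨hc₀, hr₀⟩, huniq⟩ := union_child_unique hd hl (inPT_mem hτ h)
    rw [Finset.card_eq_one]
    refine ⟨(c₀, u), ?_⟩
    ext e
    simp only [Finset.mem_filter, mem_inEdges, Finset.mem_singleton]
    constructor
    · rintro ⟨⟨hce, he2⟩, hpt⟩
      obtain ⟨e1, e2⟩ := e
      simp only at hce he2 hpt ⊢
      subst he2
      have := huniq e1 ⟨hce, hpt.2.2⟩
      simp [this]
    · rintro rfl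
      exact ⟨⟨hc₀, rfl⟩, h, hc₀, hr₀⟩
  · rw [if_neg h, Finset.card_eq_zero, Finset.filter_eq_empty_iff]
    intro e he hpt
    rw [mem_inEdges] at he
    exact h (he.2 ▸ hpt.1)

open Classical in
lemma filter_out (hd : C.DisjointUnions) {τ : X → Option D} {u : C.Gate}
    (hτ : τ ∈ C.rel C.output) (hne : u ≠ C.output) :
    ((C.outEdges u).filter (fun e => C.EdgeInPT τ e)).card
      = if C.InPT τ u then 1 else 0 := by
  by_cases h : C.InPT τ u
  · rw [if_pos h, Finset.card_eq_one]
    have hr := inPT_mem hτ h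
    obtain ⟨v₀, hv₀, hc₀⟩ : ∃ v, C.InPT τ v ∧ u ∈ C.children v := by
      cases h with
      | out => exact absurd rfl hne
      | step hv hc _ => exact ⟨_, hv, hc⟩
    refine ⟨(u, v₀), ?_⟩
    ext e
    simp only [Finset.mem_filter, mem_outEdges, Finset.mem_singleton]
    constructor
    · rintro ⟨⟨he1, hce⟩, hpt⟩
      obtain ⟨e1, e2⟩ := e
      simp only at he1 hce hpt ⊢
      subst he1
      have h2 : e2 = v₀ := parent_unique hd hτ hpt.1 hv₀ hpt.2.1 hc₀ hr
      simp [h2]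
    · rintro rfl
      exact ⟨⟨rfl, hc₀⟩, hv₀, hc₀, hr⟩
  · rw [if_neg h, Finset.card_eq_zero, Finset.filter_eq_empty_iff]
    intro e he hpt
    rw [mem_outEdges] at he
    exact h (he.1 ▸ InPT.step hpt.1 hpt.2.1 hpt.2.2)

open Classical in
lemma sum_edges (ω : (X → Option D) → ℝ) (E : Finset (C.Gate × C.Gate)) :
    ∑ e ∈ E, ∑ τ ∈ C.relEdge e, ω τ
      = ∑ τ ∈ C.rel C.output,
          ((E.filter (fun e => C.EdgeInPT τ e)).card : ℝ) * ω τ := by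
  have h1 : ∀ e, ∑ τ ∈ C.relEdge e, ω τ
      = ∑ τ ∈ C.rel C.output, if C.EdgeInPT τ e then ω τ else 0 := by
    intro e
    rw [relEdge, Finset.sum_filter]
  simp only [h1]
  rw [Finset.sum_comm]
  refine Finset.sum_congr rfl fun τ _ => ?_
  rw [← Finset.sum_filter, Finset.sum_const, nsmul_eq_mul]

end Circuit

/-- The edge-weighting induced by any tuple-weighting of a d-circuit is sound. -/
theorem induced_weighting_sound {X D : Type} [Fintype X] [Fintype D]
    [DecidableEq X] [DecidableEq D]
    (C : Circuit X D) (hd : C.DisjointUnions)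
    (ω : (X → Option D) → ℝ) (hω : ∀ τ ∈ C.rel C.output, 0 ≤ ω τ) :
    C.Sound (fun e => ∑ τ ∈ C.relEdge e, ω τ) := by
  classical
  constructor
  · intro u hl hne
    rw [C.sum_edges ω (C.inEdges u), C.sum_edges ω (C.outEdges u)]
    refine Finset.sum_congr rfl fun τ hτ => ?_
    rw [Circuit.filter_in_union hd hτ hl, Circuit.filter_out hd hτ hne]
  · intro u hl
    constructor
    · intro i hi i' hi'
      rw [Circuit.mem_inEdges] at hi hi'
      obtain ⟨c, u1⟩ := i
      obtain ⟨c', u2⟩ := i'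
      simp only at hi hi' ⊢
      obtain ⟨hc, rfl⟩ := hi
      obtain ⟨hc', rfl⟩ := hi'
      rw [Circuit.relEdge, Circuit.relEdge, Finset.sum_filter, Finset.sum_filter]
      refine Finset.sum_congr rfl fun τ hτ => ?_
      exact if_congr
        ((Circuit.edgeInPT_prod_iff hτ hl hc).trans
          (Circuit.edgeInPT_prod_iff hτ hl hc').symm) rfl rfl
    · intro hne i hi
      rw [Circuit.mem_inEdges] at hi
      obtain ⟨c, u1⟩ := i
      simp only at hi ⊢
      obtain ⟨hc, rfl⟩ := hi
      rw [C.sum_edges ω (C.outEdges u1), Circuit.relEdge, Finset.sum_filter]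
      refine Finset.sum_congr rfl fun τ hτ => ?_
      rw [Circuit.filter_out hd hτ hne,
        if_congr (Circuit.edgeInPT_prod_iff hτ hl hc) rfl rfl]
      by_cases h : C.InPT τ u1 <;> simp [h]
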